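/- Let (x,y,z) ∈ 𝓗 with x, z ≥ 0, −x ≤ y < 0, and x ≤ √(z − xy). Then ℓ_X(x,y,z) = 2⌈2√(z−xy)⌉ − x + y. -/

import Mathlib

open scoped commutatorElement

/-- The two generators `a, b` of the discrete Heisenberg group. -/
inductive HGen : Type
  | a | b
deriving DecidableEq

/-- Relators of the discrete Heisenberg group `⟨a,b ∣ [a,[a,b]] = [b,[a,b]] = 1⟩`. -/
def Hrels : Set (FreeGroup HGen) :=
  { ⁅FreeGroup.of HGen.a, ⁅FreeGroup.of HGen.a, FreeGroup.of HGen.b⁆⁆,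
    ⁅FreeGroup.of HGen.b, ⁅FreeGroup.of HGen.a, FreeGroup.of HGen.b⁆⁆ }

/-- The discrete Heisenberg group `𝓗`. -/
abbrev Heis : Type := PresentedGroup Hrels

/-- The generator `a` of `𝓗`. -/
def Ha : Heis := PresentedGroup.of HGen.a

/-- The generator `b` of `𝓗`. -/
def Hb : Heis := PresentedGroup.of HGen.b

/-- The four letters of the alphabet `X = {a, a⁻¹, b, b⁻¹}`. -/
inductive XLetter : Type
  | a | A | b | B
deriving DecidableEq

/-- The element of `𝓗` represented by a letter of `X`. -/
def XLetter.toH : XLetter → Heis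
  | .a => Ha
  | .A => Ha⁻¹
  | .b => Hb
  | .B => Hb⁻¹

/-- The element of `𝓗` represented by a word over `X`. -/
def evalX (w : List XLetter) : Heis := (w.map XLetter.toH).prod

/-- The word `a^k` over `X`, for `k ∈ ℤ`. -/
def apow (k : ℤ) : List XLetter :=
  if 0 ≤ k then List.replicate k.toNat XLetter.a else List.replicate (-k).toNat XLetter.A

/-- The word `b^k` over `X`, for `k ∈ ℤ`. -/
def bpow (k : ℤ) : List XLetter :=
  if 0 ≤ k then List.replicate k.toNat XLetter.b else List.replicate (-k).toNat XLetter.B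

/-- The element `(x,y,z)` of `𝓗`, i.e. the element with normal form `[a,b]^z b^y a^x`. -/
def hElt (x y z : ℤ) : Heis := ⁅Ha, Hb⁆ ^ z * Hb ^ y * Ha ^ x

/-- The word length `ℓ_X(g)` of `g ∈ 𝓗` with respect to `X`. -/
noncomputable def lenX (g : Heis) : ℕ :=
  sInf { n | ∃ w : List XLetter, evalX w = g ∧ w.length = n }

/-- A word over `X` is geodesic if its length equals the word length of the
element it represents. -/
def IsGeodesicX (w : List XLetter) : Prop := w.length = lenX (evalX w)

set_option maxHeartbeats 1000000

/-! ### An explicit model of the Heisenberg group -/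

@[ext]
structure H3 where
  x : ℤ
  y : ℤ
  z : ℤ

namespace H3

instance : Mul H3 := ⟨fun g h => ⟨g.x + h.x, g.y + h.y, g.z + h.z + g.x * h.y⟩⟩
instance : One H3 := ⟨⟨0, 0, 0⟩⟩
instance : Inv H3 := ⟨fun g => ⟨-g.x, -g.y, -g.z + g.x * g.y⟩⟩

@[simp] lemma mul_x (g h : H3) : (g * h).x = g.x + h.x := rfl
@[simp] lemma mul_y (g h : H3) : (g * h).y = g.y + h.y := rfl
@[simp] lemma mul_z (g h : H3) : (g * h).z = g.z + h.z + g.x * h.y := rfl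
@[simp] lemma one_x : (1 : H3).x = 0 := rfl
@[simp] lemma one_y : (1 : H3).y = 0 := rfl
@[simp] lemma one_z : (1 : H3).z = 0 := rfl
@[simp] lemma inv_x (g : H3) : (g⁻¹).x = -g.x := rfl
@[simp] lemma inv_y (g : H3) : (g⁻¹).y = -g.y := rfl
@[simp] lemma inv_z (g : H3) : (g⁻¹).z = -g.z + g.x * g.y := rfl

instance : Group H3 where
  mul_assoc a b c := by ext <;> simp <;> ring
  one_mul a := by ext <;> simp
  mul_one a := by ext <;> simp
  inv_mul_cancel a := by ext <;> simp <;> ring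

end H3

def HGen.toH3 : HGen → H3
  | .a => ⟨1, 0, 0⟩
  | .b => ⟨0, 1, 0⟩

lemma Hrels_lift (r : FreeGroup HGen) (hr : r ∈ Hrels) :
    FreeGroup.lift HGen.toH3 r = 1 := by
  have ha : FreeGroup.lift HGen.toH3 (FreeGroup.of HGen.a) = ⟨1,0,0⟩ := FreeGroup.lift_apply_of
  have hb : FreeGroup.lift HGen.toH3 (FreeGroup.of HGen.b) = ⟨0,1,0⟩ := FreeGroup.lift_apply_of
  rcases hr with hr | hr <;>
  · subst hr
    simp only [map_commutatorElement, ha, hb]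
    ext <;> simp [commutatorElement_def] <;> ring

/-- The abelianization-plus-area homomorphism to the model. -/
noncomputable def phi : Heis →* H3 := PresentedGroup.toGroup Hrels_lift

@[simp] lemma phi_Ha : phi Ha = ⟨1,0,0⟩ := PresentedGroup.toGroup.of Hrels_lift
@[simp] lemma phi_Hb : phi Hb = ⟨0,1,0⟩ := PresentedGroup.toGroup.of Hrels_lift

lemma H3_a_zpow (k : ℤ) : (⟨1,0,0⟩ : H3) ^ k = ⟨k, 0, 0⟩ := by
  induction k using Int.induction_on with
  | zero => rfl
  | succ n ih => rw [zpow_add_one, ih]; ext <;> simp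
  | pred n ih => rw [zpow_sub_one, ih]; ext <;> simp <;> ring

lemma H3_b_zpow (k : ℤ) : (⟨0,1,0⟩ : H3) ^ k = ⟨0, k, 0⟩ := by
  induction k using Int.induction_on with
  | zero => rfl
  | succ n ih => rw [zpow_add_one, ih]; ext <;> simp
  | pred n ih => rw [zpow_sub_one, ih]; ext <;> simp <;> ring

lemma H3_c_zpow (k : ℤ) : (⟨0,0,1⟩ : H3) ^ k = ⟨0, 0, k⟩ := by
  induction k using Int.induction_on with
  | zero => rfl
  | succ n ih => rw [zpow_add_one, ih]; ext <;> simp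
  | pred n ih => rw [zpow_sub_one, ih]; ext <;> simp <;> ring

lemma phi_hElt (x y z : ℤ) : phi (hElt x y z) = ⟨x, y, z⟩ := by
  have hc : phi ⁅Ha, Hb⁆ = ⟨0,0,1⟩ := by
    rw [map_commutatorElement, phi_Ha, phi_Hb]
    ext <;> simp [commutatorElement_def]
  rw [hElt, map_mul, map_mul, map_zpow, map_zpow, map_zpow, hc, phi_Ha, phi_Hb,
    H3_a_zpow, H3_b_zpow, H3_c_zpow]
  ext <;> simp
/-! ### Words: evaluation, displacements -/

lemma evalX_nil : evalX [] = 1 := rfl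

lemma evalX_cons (l : XLetter) (w : List XLetter) :
    evalX (l :: w) = l.toH * evalX w := by
  simp [evalX]

lemma evalX_append (w₁ w₂ : List XLetter) :
    evalX (w₁ ++ w₂) = evalX w₁ * evalX w₂ := by
  simp [evalX]

lemma evalX_replicate_a (n : ℕ) : evalX (List.replicate n XLetter.a) = Ha ^ n := by
  induction n with
  | zero => rfl
  | succ n ih => rw [List.replicate_succ, evalX_cons, ih]; simp [XLetter.toH, pow_succ']

lemma evalX_replicate_A (n : ℕ) : evalX (List.replicate n XLetter.A) = Ha⁻¹ ^ n := by
  induction n with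
  | zero => rfl
  | succ n ih => rw [List.replicate_succ, evalX_cons, ih]; simp [XLetter.toH, pow_succ']

lemma evalX_replicate_b (n : ℕ) : evalX (List.replicate n XLetter.b) = Hb ^ n := by
  induction n with
  | zero => rfl
  | succ n ih => rw [List.replicate_succ, evalX_cons, ih]; simp [XLetter.toH, pow_succ']

lemma evalX_replicate_B (n : ℕ) : evalX (List.replicate n XLetter.B) = Hb⁻¹ ^ n := by
  induction n with
  | zero => rfl
  | succ n ih => rw [List.replicate_succ, evalX_cons, ih]; simp [XLetter.toH, pow_succ']

lemma evalX_apow (k : ℤ) : evalX (apow k) = Ha ^ k := by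
  rw [apow]
  split_ifs with h
  · rw [evalX_replicate_a, ← zpow_natCast, Int.toNat_of_nonneg h]
  · rw [evalX_replicate_A, inv_pow, ← zpow_natCast, Int.toNat_of_nonneg (by omega),
      ← zpow_neg, neg_neg]

lemma evalX_bpow (k : ℤ) : evalX (bpow k) = Hb ^ k := by
  rw [bpow]
  split_ifs with h
  · rw [evalX_replicate_b, ← zpow_natCast, Int.toNat_of_nonneg h]
  · rw [evalX_replicate_B, inv_pow, ← zpow_natCast, Int.toNat_of_nonneg (by omega),
      ← zpow_neg, neg_neg]

lemma length_apow (k : ℤ) : (apow k).length = k.natAbs := by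
  rw [apow]; split_ifs with h <;> simp <;> omega

lemma length_bpow (k : ℤ) : (bpow k).length = k.natAbs := by
  rw [bpow]; split_ifs with h <;> simp <;> omega

/-! ### Displacement and area functions on words -/

/-- Horizontal displacement of a word. -/
def dxL : List XLetter → ℤ
  | [] => 0
  | .a :: w => 1 + dxL w
  | .A :: w => -1 + dxL w
  | .b :: w => dxL w
  | .B :: w => dxL w

/-- Vertical displacement of a word. -/
def dyL : List XLetter → ℤ
  | [] => 0
  | .a :: w => dyL w
  | .A :: w => dyL w
  | .b :: w => 1 + dyL w
  | .B :: w => -1 + dyL w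

/-- The "balayage area" of a word starting at horizontal position `t`. -/
def fz : ℤ → List XLetter → ℤ
  | _, [] => 0
  | t, .a :: w => fz (t+1) w
  | t, .A :: w => fz (t-1) w
  | t, .b :: w => t + fz t w
  | t, .B :: w => -t + fz t w

lemma dxL_append (w₁ w₂ : List XLetter) : dxL (w₁ ++ w₂) = dxL w₁ + dxL w₂ := by
  induction w₁ with
  | nil => simp [dxL]
  | cons l w ih => cases l <;> simp [dxL, ih] <;> ring

lemma dyL_append (w₁ w₂ : List XLetter) : dyL (w₁ ++ w₂) = dyL w₁ + dyL w₂ := by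
  induction w₁ with
  | nil => simp [dyL]
  | cons l w ih => cases l <;> simp [dyL, ih] <;> ring

lemma fz_append (t : ℤ) (w₁ w₂ : List XLetter) :
    fz t (w₁ ++ w₂) = fz t w₁ + fz (t + dxL w₁) w₂ := by
  induction w₁ generalizing t with
  | nil => simp [fz, dxL]
  | cons l w ih =>
    cases l <;> simp only [List.cons_append, fz, dxL, List.append_eq] <;> rw [ih] <;> ring

/-- The fundamental computation: `phi` of a word is given by displacements and area. -/
lemma phi_evalX (w : List XLetter) (g : H3) :
    g * phi (evalX w) = ⟨g.x + dxL w, g.y + dyL w, g.z + fz g.x w⟩ := by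
  induction w generalizing g with
  | nil => rw [evalX_nil, map_one, mul_one]; ext <;> simp [dxL, dyL, fz]
  | cons l w ih =>
    rw [evalX_cons, map_mul, ← mul_assoc, ih]
    cases l <;> ext <;>
      simp [XLetter.toH, dxL, dyL, fz, sub_eq_add_neg] <;> ring
/-! ### Displacements of power words -/

lemma dxL_replicate_a (n : ℕ) : dxL (List.replicate n .a) = n := by
  induction n with
  | zero => rfl
  | succ n ih => rw [List.replicate_succ]; simp [dxL, ih]; omega

lemma dxL_replicate_A (n : ℕ) : dxL (List.replicate n .A) = -n := by
  induction n with
  | zero => rfl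
  | succ n ih => rw [List.replicate_succ]; simp [dxL, ih]

lemma dxL_replicate_b (n : ℕ) : dxL (List.replicate n .b) = 0 := by
  induction n with
  | zero => rfl
  | succ n ih => rw [List.replicate_succ]; simp [dxL, ih]

lemma dxL_replicate_B (n : ℕ) : dxL (List.replicate n .B) = 0 := by
  induction n with
  | zero => rfl
  | succ n ih => rw [List.replicate_succ]; simp [dxL, ih]

lemma dyL_replicate_a (n : ℕ) : dyL (List.replicate n .a) = 0 := by
  induction n with
  | zero => rfl
  | succ n ih => rw [List.replicate_succ]; simp [dyL, ih]

lemma dyL_replicate_A (n : ℕ) : dyL (List.replicate n .A) = 0 := by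
  induction n with
  | zero => rfl
  | succ n ih => rw [List.replicate_succ]; simp [dyL, ih]

lemma dyL_replicate_b (n : ℕ) : dyL (List.replicate n .b) = n := by
  induction n with
  | zero => rfl
  | succ n ih => rw [List.replicate_succ]; simp [dyL, ih]; omega

lemma dyL_replicate_B (n : ℕ) : dyL (List.replicate n .B) = -n := by
  induction n with
  | zero => rfl
  | succ n ih => rw [List.replicate_succ]; simp [dyL, ih]

lemma fz_replicate_a (n : ℕ) (t : ℤ) : fz t (List.replicate n .a) = 0 := by
  induction n generalizing t with
  | zero => rfl
  | succ n ih => rw [List.replicate_succ]; simp [fz, ih]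

lemma fz_replicate_A (n : ℕ) (t : ℤ) : fz t (List.replicate n .A) = 0 := by
  induction n generalizing t with
  | zero => rfl
  | succ n ih => rw [List.replicate_succ]; simp [fz, ih]

lemma fz_replicate_b (n : ℕ) (t : ℤ) : fz t (List.replicate n .b) = n * t := by
  induction n generalizing t with
  | zero => simp [fz]
  | succ n ih => rw [List.replicate_succ]; simp [fz, ih]; ring

lemma fz_replicate_B (n : ℕ) (t : ℤ) : fz t (List.replicate n .B) = -(n * t) := by
  induction n generalizing t with
  | zero => simp [fz]
  | succ n ih => rw [List.replicate_succ]; simp [fz, ih]; ring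

lemma dxL_apow (k : ℤ) : dxL (apow k) = k := by
  rw [apow]; split_ifs with h
  · rw [dxL_replicate_a]; omega
  · rw [dxL_replicate_A]; omega

lemma dxL_bpow (k : ℤ) : dxL (bpow k) = 0 := by
  rw [bpow]; split_ifs with h
  · rw [dxL_replicate_b]
  · rw [dxL_replicate_B]

lemma dyL_apow (k : ℤ) : dyL (apow k) = 0 := by
  rw [apow]; split_ifs with h
  · rw [dyL_replicate_a]
  · rw [dyL_replicate_A]

lemma dyL_bpow (k : ℤ) : dyL (bpow k) = k := by
  rw [bpow]; split_ifs with h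
  · rw [dyL_replicate_b]; omega
  · rw [dyL_replicate_B]; omega

lemma fz_apow (k : ℤ) (t : ℤ) : fz t (apow k) = 0 := by
  rw [apow]; split_ifs with h
  · rw [fz_replicate_a]
  · rw [fz_replicate_A]

lemma fz_bpow (k : ℤ) (t : ℤ) : fz t (bpow k) = k * t := by
  rw [bpow]; split_ifs with h
  · rw [fz_replicate_b]; congr 1; omega
  · rw [fz_replicate_B]
    have : (((-k).toNat : ℤ)) = -k := by omega
    rw [this]; ring
/-! ### The discrete isoperimetric inequality -/

lemma length_eq_counts (w : List XLetter) :
    w.length = w.count .a + w.count .A + w.count .b + w.count .B := by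
  induction w with
  | nil => rfl
  | cons l w ih => cases l <;> simp [List.count_cons, ih] <;> omega

lemma dxL_eq_counts (w : List XLetter) :
    dxL w = (w.count .a : ℤ) - (w.count .A : ℤ) := by
  induction w with
  | nil => rfl
  | cons l w ih => cases l <;> simp [List.count_cons, dxL, ih] <;> omega

lemma dyL_eq_counts (w : List XLetter) :
    dyL w = (w.count .b : ℤ) - (w.count .B : ℤ) := by
  induction w with
  | nil => rfl
  | cons l w ih => cases l <;> simp [List.count_cons, dyL, ih] <;> omega

lemma fz_weighted (m M : ℤ) :
    ∀ (w : List XLetter) (t : ℤ),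
      (∀ i ≤ w.length, m ≤ t + dxL (w.take i) ∧ t + dxL (w.take i) ≤ M) →
      |2 * fz t w - (m + M) * dyL w| ≤ ((w.count .b : ℤ) + (w.count .B : ℤ)) * (M - m)
  | [], t, H => by simp [fz, dyL]
  | l :: w, t, H => by
    have h0 : m ≤ t ∧ t ≤ M := by simpa [dxL] using H 0 (by simp)
    cases l with
    | a =>
      have ih := fz_weighted m M w (t + 1) (fun i hi => by
        have h := H (i+1) (by simpa using hi)
        simp only [List.take_succ_cons, dxL] at h
        constructor <;> omega)
      simpa [fz, dyL, List.count_cons] using ih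
    | A =>
      have ih := fz_weighted m M w (t - 1) (fun i hi => by
        have h := H (i+1) (by simpa using hi)
        simp only [List.take_succ_cons, dxL] at h
        constructor <;> omega)
      simpa [fz, dyL, List.count_cons] using ih
    | b =>
      have ih := fz_weighted m M w t (fun i hi => by
        have h := H (i+1) (by simpa using hi)
        simp only [List.take_succ_cons, dxL] at h
        constructor <;> omega)
      have habs : |2 * t - (m + M)| ≤ M - m := by rw [abs_le]; omega
      have key : 2 * fz t (XLetter.b :: w) - (m + M) * dyL (XLetter.b :: w)
          = (2 * t - (m + M)) + (2 * fz t w - (m + M) * dyL w) := by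
        simp only [fz, dyL]; ring
      have hc : ((XLetter.b :: w).count .b : ℤ) = (w.count .b : ℤ) + 1 := by
        simp [List.count_cons]
      have hc' : ((XLetter.b :: w).count .B : ℤ) = (w.count .B : ℤ) := by
        simp [List.count_cons]
      have expand : ((w.count .b : ℤ) + 1 + (w.count .B : ℤ)) * (M - m)
          = (M - m) + ((w.count .b : ℤ) + (w.count .B : ℤ)) * (M - m) := by ring
      rw [key, hc, hc', expand]
      exact le_trans (abs_add_le _ _) (add_le_add habs ih)
    | B =>
      have ih := fz_weighted m M w t (fun i hi => by
        have h := H (i+1) (by simpa using hi)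
        simp only [List.take_succ_cons, dxL] at h
        constructor <;> omega)
      have habs : |-(2 * t) + (m + M)| ≤ M - m := by rw [abs_le]; omega
      have key : 2 * fz t (XLetter.B :: w) - (m + M) * dyL (XLetter.B :: w)
          = (-(2 * t) + (m + M)) + (2 * fz t w - (m + M) * dyL w) := by
        simp only [fz, dyL]; ring
      have hc : ((XLetter.B :: w).count .B : ℤ) = (w.count .B : ℤ) + 1 := by
        simp [List.count_cons]
      have hc' : ((XLetter.B :: w).count .b : ℤ) = (w.count .b : ℤ) := by
        simp [List.count_cons]
      have expand : ((w.count .b : ℤ) + ((w.count .B : ℤ) + 1)) * (M - m)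
          = (M - m) + ((w.count .b : ℤ) + (w.count .B : ℤ)) * (M - m) := by ring
      rw [key, hc, hc', expand]
      exact le_trans (abs_add_le _ _) (add_le_add habs ih)

lemma dxL_le_count (w : List XLetter) : dxL w ≤ (w.count .a : ℤ) := by
  have h := dxL_eq_counts w
  have : (0 : ℤ) ≤ (w.count .A : ℤ) := Int.natCast_nonneg _
  omega

lemma neg_count_le_dxL (w : List XLetter) : -(w.count .A : ℤ) ≤ dxL w := by
  have h := dxL_eq_counts w
  have : (0 : ℤ) ≤ (w.count .a : ℤ) := Int.natCast_nonneg _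
  omega

/-- Between two times, horizontal displacement is bounded by counts of letters. -/
lemma segment_bound (u : List XLetter) (i j : ℕ) (hij : i ≤ j) :
    dxL (u.take j) - dxL (u.take i) ≤ (u.count .a : ℤ) ∧
    -(u.count .A : ℤ) ≤ dxL (u.take j) - dxL (u.take i) := by
  have hdecomp : u.take j = u.take i ++ (u.take j).drop i := by
    conv_lhs => rw [← List.take_append_drop i (u.take j)]
    rw [List.take_take, min_eq_left hij]
  set s := (u.take j).drop i with hs
  have hsub : List.Sublist s u :=
    List.Sublist.trans (List.drop_sublist i (u.take j)) (List.take_sublist j u)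
  have hdx : dxL (u.take j) - dxL (u.take i) = dxL s := by
    rw [hdecomp, dxL_append]; ring
  constructor
  · rw [hdx]
    exact (dxL_le_count s).trans (by exact_mod_cast Nat.cast_le.2 (hsub.count_le _))
  · rw [hdx]
    refine le_trans ?_ (neg_count_le_dxL s)
    have := hsub.count_le XLetter.A
    omega

/-- The discrete isoperimetric inequality: a closed word of length `L` sweeps
algebraic area at most `L²/16`. -/
lemma isoperimetric (u : List XLetter) (hx : dxL u = 0) (hy : dyL u = 0) :
    16 * fz 0 u ≤ (u.length : ℤ) ^ 2 := by
  classical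
  set n := u.length with hn
  have hne : ((Finset.range (n+1)).image (fun i => dxL (u.take i))).Nonempty :=
    ⟨dxL (u.take 0), Finset.mem_image.2 ⟨0, by simp, rfl⟩⟩
  set F := (Finset.range (n+1)).image (fun i => dxL (u.take i)) with hF
  set M := F.max' hne with hM
  set m := F.min' hne with hm
  have hbound : ∀ i ≤ n, m ≤ 0 + dxL (u.take i) ∧ 0 + dxL (u.take i) ≤ M := by
    intro i hi
    have himem : dxL (u.take i) ∈ F :=
      Finset.mem_image.2 ⟨i, Finset.mem_range.2 (by omega), rfl⟩
    exact ⟨by simpa using F.min'_le _ himem, by simpa using F.le_max' _ himem⟩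
  obtain ⟨iM, hiMeq⟩ : ∃ i, dxL (u.take i) = M := by
    have hmem : M ∈ F := F.max'_mem hne
    rw [hF] at hmem
    obtain ⟨i, _, hieq⟩ := Finset.mem_image.1 hmem
    exact ⟨i, hieq⟩
  obtain ⟨im, himeq⟩ : ∃ i, dxL (u.take i) = m := by
    have hmem : m ∈ F := F.min'_mem hne
    rw [hF] at hmem
    obtain ⟨i, _, hieq⟩ := Finset.mem_image.1 hmem
    exact ⟨i, hieq⟩
  have hcount_eq : (u.count .a : ℤ) = (u.count .A : ℤ) := by
    have := dxL_eq_counts u; omega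
  have hMm : 2 * (M - m) ≤ (u.count .a : ℤ) + (u.count .A : ℤ) := by
    rcases le_total im iM with hc | hc
    · have := (segment_bound u im iM hc).1; omega
    · have := (segment_bound u iM im hc).2; omega
  have hweight := fz_weighted m M u 0 hbound
  rw [hy, mul_zero, sub_zero] at hweight
  have habs := (abs_le.1 hweight).2
  have hv : (0 : ℤ) ≤ (u.count .b : ℤ) + (u.count .B : ℤ) := by positivity
  have hlen : (n : ℤ) = ((u.count .a : ℤ) + (u.count .A : ℤ))
      + ((u.count .b : ℤ) + (u.count .B : ℤ)) := by
    have := length_eq_counts u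
    omega
  set h := (u.count .a : ℤ) + (u.count .A : ℤ)
  set v := (u.count .b : ℤ) + (u.count .B : ℤ)
  have h4 : 4 * (2 * fz 0 u) ≤ 2 * (v * (M - m)) * 2 := by linarith
  nlinarith [sq_nonneg (v - h), mul_le_mul_of_nonneg_left hMm hv, sq_nonneg (v + h)]
/-! ### Computation rules in the Heisenberg group -/

lemma Heis_rel (r : FreeGroup HGen) (hr : r ∈ Hrels) : PresentedGroup.mk Hrels r = 1 := by
  have hmem : r ∈ Subgroup.normalClosure Hrels := Subgroup.subset_normalClosure hr
  exact (QuotientGroup.eq_one_iff r).mpr hmem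

lemma comm_ac : ⁅Ha, ⁅Ha, Hb⁆⁆ = 1 := by
  have ha : Ha = PresentedGroup.mk Hrels (FreeGroup.of HGen.a) := rfl
  have hb : Hb = PresentedGroup.mk Hrels (FreeGroup.of HGen.b) := rfl
  rw [ha, hb, ← map_commutatorElement, ← map_commutatorElement]
  exact Heis_rel _ (Set.mem_insert _ _)

lemma comm_bc : ⁅Hb, ⁅Ha, Hb⁆⁆ = 1 := by
  have ha : Ha = PresentedGroup.mk Hrels (FreeGroup.of HGen.a) := rfl
  have hb : Hb = PresentedGroup.mk Hrels (FreeGroup.of HGen.b) := rfl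
  rw [ha, hb, ← map_commutatorElement, ← map_commutatorElement]
  exact Heis_rel _ (Set.mem_insert_of_mem _ rfl)

/-- The commutator `c = [a,b]` is central. -/
lemma central_c (g : Heis) : Commute ⁅Ha, Hb⁆ g := by
  have hg : g ∈ Subgroup.centralizer ({⁅Ha, Hb⁆} : Set Heis) := by
    refine PresentedGroup.generated_by Hrels _ (fun j => ?_) g
    rw [Subgroup.mem_centralizer_iff]
    rintro c' (rfl : c' = ⁅Ha, Hb⁆)
    cases j with
    | a => exact ((commutatorElement_eq_one_iff_commute.1 comm_ac).symm).eq
    | b => exact ((commutatorElement_eq_one_iff_commute.1 comm_bc).symm).eq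
  have := (Subgroup.mem_centralizer_iff.1 hg) ⁅Ha, Hb⁆ rfl
  exact this

lemma c_move (t : ℤ) (g h : Heis) :
    g * (⁅Ha, Hb⁆ ^ t * h) = ⁅Ha, Hb⁆ ^ t * (g * h) := by
  rw [← mul_assoc, ← ((central_c g).zpow_left t).eq, mul_assoc]

lemma swap_ab : SemiconjBy Ha Hb (⁅Ha, Hb⁆ * Hb) := by
  unfold SemiconjBy
  rw [commutatorElement_def]
  group

/-- `a^m * b^k = c^(m k) * (b^k * a^m)`. -/
lemma swap_apow_bpow (m k : ℤ) :
    Ha ^ m * Hb ^ k = ⁅Ha, Hb⁆ ^ (m * k) * (Hb ^ k * Ha ^ m) := by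
  -- first: b * a = c⁻¹ * a * b, i.e. SemiconjBy Hb Ha (c⁻¹ * Ha)
  have h1 : SemiconjBy Hb Ha (⁅Ha, Hb⁆⁻¹ * Ha) := by
    unfold SemiconjBy
    rw [commutatorElement_def]
    group
  have h2 : SemiconjBy Hb (Ha ^ m) ((⁅Ha, Hb⁆⁻¹ * Ha) ^ m) := h1.zpow_right m
  have h3 : (⁅Ha, Hb⁆⁻¹ * Ha) ^ m = ⁅Ha, Hb⁆ ^ (-m) * Ha ^ m := by
    rw [((central_c Ha).inv_left).mul_zpow, zpow_neg, inv_zpow]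
  -- so Hb * Ha^m = c^(-m) * Ha^m * Hb, hence SemiconjBy (Ha^m) Hb (c^m * Hb)
  have h4 : SemiconjBy (Ha ^ m) Hb (⁅Ha, Hb⁆ ^ m * Hb) := by
    unfold SemiconjBy at h2 ⊢
    rw [h3] at h2
    calc Ha ^ m * Hb = ⁅Ha, Hb⁆ ^ m * (⁅Ha, Hb⁆ ^ (-m) * (Ha ^ m * Hb)) := by
          rw [← mul_assoc, ← zpow_add]; simp
      _ = ⁅Ha, Hb⁆ ^ m * (⁅Ha, Hb⁆ ^ (-m) * Ha ^ m * Hb) := by rw [mul_assoc]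
      _ = ⁅Ha, Hb⁆ ^ m * (Hb * Ha ^ m) := by rw [← h2]
      _ = ⁅Ha, Hb⁆ ^ m * Hb * Ha ^ m := by rw [mul_assoc]
  have h5 : SemiconjBy (Ha ^ m) (Hb ^ k) ((⁅Ha, Hb⁆ ^ m * Hb) ^ k) := h4.zpow_right k
  have h6 : (⁅Ha, Hb⁆ ^ m * Hb) ^ k = ⁅Ha, Hb⁆ ^ (m * k) * Hb ^ k := by
    rw [((central_c Hb).zpow_left m).mul_zpow, ← zpow_mul]
  unfold SemiconjBy at h5
  rw [h6] at h5
  rw [h5, mul_assoc]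

lemma hElt_mul_apow (x y z k : ℤ) (g : Heis) :
    hElt x y z * (Ha ^ k * g) = hElt (x + k) y z * g := by
  rw [hElt, hElt, zpow_add]
  group

lemma hElt_mul_bpow (x y z k : ℤ) (g : Heis) :
    hElt x y z * (Hb ^ k * g) = hElt x (y + k) (z + x * k) * g := by
  rw [hElt, hElt]
  calc ⁅Ha, Hb⁆ ^ z * Hb ^ y * Ha ^ x * (Hb ^ k * g)
      = ⁅Ha, Hb⁆ ^ z * (Hb ^ y * ((Ha ^ x * Hb ^ k) * g)) := by group
    _ = ⁅Ha, Hb⁆ ^ z * (Hb ^ y * ((⁅Ha, Hb⁆ ^ (x * k) * (Hb ^ k * Ha ^ x)) * g)) := by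
        rw [swap_apow_bpow]
    _ = ⁅Ha, Hb⁆ ^ z * (Hb ^ y * (⁅Ha, Hb⁆ ^ (x * k) * (Hb ^ k * Ha ^ x * g))) := by
        rw [mul_assoc]
    _ = ⁅Ha, Hb⁆ ^ z * (⁅Ha, Hb⁆ ^ (x * k) * (Hb ^ y * (Hb ^ k * Ha ^ x * g))) := by
        rw [c_move]
    _ = ⁅Ha, Hb⁆ ^ (z + x * k) * Hb ^ (y + k) * Ha ^ x * g := by
        rw [zpow_add, zpow_add]
        group

lemma Ha_zpow_eq (k : ℤ) : Ha ^ k = hElt k 0 0 := by simp [hElt]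

lemma Hb_zpow_eq (k : ℤ) : Hb ^ k = hElt 0 k 0 := by simp [hElt]

lemma hElt_one : hElt 0 0 0 = 1 := by simp [hElt]
/-- Extra helper: absorb a `b`-power on the right. -/
lemma hElt_mul_bpow' (x y z k : ℤ) :
    hElt x y z * Hb ^ k = hElt x (y + k) (z + x * k) := by
  have := hElt_mul_bpow x y z k 1
  simpa using this

/-- If `x, z ≥ 0`, `−x ≤ y < 0` and `x ≤ √(z − xy)`, then
`ℓ_X(x,y,z) = 2⌈2√(z−xy)⌉ − x + y`. -/
theorem lenX_case_II1 (x y z : ℤ) (hx : 0 ≤ x) (hz : 0 ≤ z) (hy0 : y < 0) (hyx : -x ≤ y)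
    (hsqrt : (x : ℝ) ≤ Real.sqrt ((z : ℝ) - (x : ℝ) * (y : ℝ))) :
    (lenX (hElt x y z) : ℤ) = 2 * ⌈2 * Real.sqrt ((z : ℝ) - (x : ℝ) * (y : ℝ))⌉ - x + y := by
  have hx1 : 1 ≤ x := by omega
  have hcast : (z : ℝ) - (x : ℝ) * (y : ℝ) = ((z - x * y : ℤ) : ℝ) := by push_cast; ring
  rw [hcast] at hsqrt ⊢
  set S : ℤ := z - x * y with hSdef
  set sR : ℝ := Real.sqrt (S : ℝ) with hsRdef
  have hSnonneg : (0 : ℝ) ≤ (S : ℝ) := by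
    by_contra h
    push_neg at h
    have h0 : sR = 0 := Real.sqrt_eq_zero_of_nonpos h.le
    rw [h0] at hsqrt
    have hx1' : (1 : ℝ) ≤ (x : ℝ) := by exact_mod_cast hx1
    linarith
  have hsq : sR ^ 2 = (S : ℝ) := Real.sq_sqrt hSnonneg
  have hsRnn : 0 ≤ sR := Real.sqrt_nonneg _
  have hxr : (0 : ℝ) ≤ (x : ℝ) := by exact_mod_cast hx
  have hx2S : x ^ 2 ≤ S := by
    have h' : ((x ^ 2 : ℤ) : ℝ) ≤ ((S : ℤ) : ℝ) := by push_cast; nlinarith [hsqrt, hsq, hxr]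
    exact_mod_cast h'
  set r : ℤ := ⌈2 * sR⌉ with hrdef
  have hr1 : 2 * sR ≤ (r : ℝ) := Int.le_ceil _
  have hr2 : (r : ℝ) < 2 * sR + 1 := Int.ceil_lt_add_one _
  have hr2x : 2 * x ≤ r := by
    have h' : ((2 * x : ℤ) : ℝ) ≤ (r : ℝ) := by push_cast; linarith
    exact_mod_cast h'
  have hr4S : 4 * S ≤ r ^ 2 := by
    have hrpos : (0 : ℝ) ≤ (r : ℝ) := le_trans (by positivity) hr1
    have h' : ((4 * S : ℤ) : ℝ) ≤ ((r ^ 2 : ℤ) : ℝ) := by push_cast; nlinarith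
    exact_mod_cast h'
  set q : ℤ := r / 2 with hqdef
  set p : ℤ := r - q with hpdef
  have hq_x : x ≤ q := by omega
  have hq1 : 1 ≤ q := by omega
  have hpq : p + q = r := by omega
  -- `p q ≥ S`
  have hpqS : S ≤ p * q := by
    rcases Int.even_or_odd r with ⟨t, ht⟩ | ⟨t, ht⟩
    · have hqt : q = t := by omega
      have hpt : p = t := by omega
      nlinarith [hr4S]
    · have hqt : q = t := by omega
      have hpt : p = t + 1 := by omega
      nlinarith [hr4S]
  -- `x q ≤ S`
  have hxqS : x * q ≤ S := by
    rcases eq_or_lt_of_le hq_x with heq | hlt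
    · rw [← heq]; nlinarith [hx2S]
    · have h2q : 2 * q ≤ r := by omega
      have hqr : (2 * (q : ℝ) - 1) < 2 * sR := by
        have h' : ((2 * q : ℤ) : ℝ) ≤ (r : ℝ) := by exact_mod_cast h2q
        push_cast at h'
        linarith
      have hq0 : (0 : ℝ) ≤ 2 * (q : ℝ) - 1 := by
        have h' : (1 : ℝ) ≤ (q : ℝ) := by exact_mod_cast hq1
        linarith
      have hZr : ((4 * (q * q) - 4 * q + 1 : ℤ) : ℝ) < ((4 * S : ℤ) : ℝ) := by
        push_cast
        nlinarith
      have hZ : 4 * (q * q) - 4 * q + 1 < 4 * S := by exact_mod_cast hZr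
      have hqq : q * q - q < S := by linarith
      have hmul : x * q ≤ (q - 1) * q :=
        mul_le_mul_of_nonneg_right (by omega) (by omega)
      nlinarith
  -- division with remainder
  obtain ⟨d, hd⟩ : ∃ d, d = (p * q - S) / q := ⟨_, rfl⟩
  obtain ⟨rem, hrem⟩ : ∃ rem, rem = (p * q - S) % q := ⟨_, rfl⟩
  have hD0 : 0 ≤ p * q - S := by linarith
  have hdiv : q * d + rem = p * q - S := by
    rw [hd, hrem]; exact Int.mul_ediv_add_emod _ _
  have hrem0 : 0 ≤ rem := by rw [hrem]; exact Int.emod_nonneg _ (by omega)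
  have hremq : rem < q := by rw [hrem]; exact Int.emod_lt_of_pos _ (by omega)
  have hd0 : 0 ≤ d := by rw [hd]; exact Int.ediv_nonneg hD0 (by omega)
  have hDqP : p * q - S ≤ q * (p - x) := by nlinarith [hxqS]
  have hdP : d ≤ p - x := by
    have h1 : q * d ≤ q * (p - x) := by linarith
    exact le_of_mul_le_mul_left h1 (by omega)
  have hdP1 : 0 < rem → d ≤ p - x - 1 := by
    intro hr
    by_contra hcon
    push_neg at hcon
    have hdp : d = p - x := by omega
    rw [hdp] at hdiv
    linarith
  set s2 : ℤ := if rem = 0 then 0 else 1 with hs2def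
  have hs2a : 0 ≤ s2 := by rw [hs2def]; split_ifs <;> omega
  have hs2b : s2 ≤ 1 := by rw [hs2def]; split_ifs <;> omega
  have hs2rem : s2 * rem = rem := by
    rw [hs2def]; split_ifs with h <;> simp [h]
  set s1 : ℤ := p - x - d - s2 with hs1def
  have hs1 : 0 ≤ s1 := by
    rw [hs1def, hs2def]; split_ifs with h
    · omega
    · have := hdP1 (by omega); omega
  have hu2 : 0 ≤ q + y := by omega
  -- the witness word
  set W : List XLetter :=
    apow (-s1) ++ (bpow (-rem) ++ (apow (-s2) ++ (bpow (rem - q) ++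
      (apow p ++ (apow (-d) ++ bpow (q + y)))))) with hWdef
  have hWeval : evalX W = hElt x y z := by
    rw [hWdef]
    simp only [evalX_append, evalX_apow, evalX_bpow]
    calc Ha ^ (-s1) * (Hb ^ (-rem) * (Ha ^ (-s2) * (Hb ^ (rem - q) *
          (Ha ^ p * (Ha ^ (-d) * Hb ^ (q + y))))))
        = hElt 0 0 0 * (Ha ^ (-s1) * (Hb ^ (-rem) * (Ha ^ (-s2) * (Hb ^ (rem - q) *
          (Ha ^ p * (Ha ^ (-d) * Hb ^ (q + y))))))) := by rw [hElt_one, one_mul]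
      _ = hElt x y z := by
          rw [hElt_mul_apow, hElt_mul_bpow, hElt_mul_apow, hElt_mul_bpow,
            hElt_mul_apow, hElt_mul_apow, hElt_mul_bpow']
          have harg : ∀ X Y Z : ℤ, X = x → Y = y → Z = z →
              hElt X Y Z = hElt x y z := by
            intro X Y Z h1 h2 h3; rw [h1, h2, h3]
          apply harg
          · omega
          · omega
          · linear_combination hSdef - hdiv + (q - rem) * hs1def - hs2rem
  have hWlen : (W.length : ℤ) = 2 * r - x + y := by
    rw [hWdef]
    simp only [List.length_append, length_apow, length_bpow]
    omega
  -- upper bound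
  have hlenXdef : lenX (hElt x y z) =
      sInf { n | ∃ w : List XLetter, evalX w = hElt x y z ∧ w.length = n } := rfl
  have hupper : (lenX (hElt x y z) : ℤ) ≤ 2 * r - x + y := by
    have hle : lenX (hElt x y z) ≤ W.length := by
      rw [hlenXdef]
      exact Nat.sInf_le ⟨W, hWeval, rfl⟩
    have hle' : ((lenX (hElt x y z) : ℤ)) ≤ (W.length : ℤ) := by exact_mod_cast hle
    linarith [hWlen]
  -- lower bound
  have hmem := Nat.sInf_mem (s := { n | ∃ w : List XLetter, evalX w = hElt x y z ∧ w.length = n })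
    ⟨W.length, W, hWeval, rfl⟩
  obtain ⟨w0, hw0eval, hw0len⟩ := hmem
  have hphi := phi_evalX w0 1
  rw [hw0eval, phi_hElt, one_mul] at hphi
  have hphix : x = 0 + dxL w0 := congrArg H3.x hphi
  have hphiy : y = 0 + dyL w0 := congrArg H3.y hphi
  have hphiz : z = 0 + fz (H3.x 1) w0 := congrArg H3.z hphi
  have hdx0 : dxL w0 = x := by omega
  have hdy0 : dyL w0 = y := by omega
  have hfz0 : fz 0 w0 = z := by
    have : H3.x 1 = 0 := rfl
    rw [this] at hphiz
    omega
  set u : List XLetter := w0 ++ (bpow (-y) ++ apow (-x)) with hudef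
  have hux : dxL u = 0 := by
    rw [hudef, dxL_append, dxL_append, dxL_bpow, dxL_apow]; omega
  have huy : dyL u = 0 := by
    rw [hudef, dyL_append, dyL_append, dyL_bpow, dyL_apow]; omega
  have hufz : fz 0 u = S := by
    rw [hudef, fz_append, fz_append, fz_bpow, fz_apow, hfz0, hdx0]
    linear_combination -hSdef
  have hiso := isoperimetric u hux huy
  rw [hufz] at hiso
  have hulen : (u.length : ℤ) = (w0.length : ℤ) + x - y := by
    rw [hudef]
    simp only [List.length_append, length_apow, length_bpow]
    omega
  obtain ⟨t, ht⟩ : ∃ t, (w0.length : ℤ) + x - y = 2 * t := by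
    refine ⟨((w0.length : ℤ) + x - y) / 2, ?_⟩
    have hc := length_eq_counts w0
    have hdc := dxL_eq_counts w0
    have hyc := dyL_eq_counts w0
    omega
  have hL2 : 16 * S ≤ (2 * t) ^ 2 := by
    rw [← ht, ← hulen]; exact hiso
  have htpos : 0 ≤ t := by omega
  have h2t : 2 * sR ≤ (t : ℝ) := by
    have h16 : ((16 * S : ℤ) : ℝ) ≤ (((2 * t) ^ 2 : ℤ) : ℝ) := by exact_mod_cast hL2
    have htr : (0 : ℝ) ≤ (t : ℝ) := by exact_mod_cast htpos
    push_cast at h16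
    nlinarith [hsq, hsRnn]
  have hrt : r ≤ t := by
    rw [hrdef]; exact Int.ceil_le.2 (by exact_mod_cast h2t)
  have hlower : 2 * r - x + y ≤ (lenX (hElt x y z) : ℤ) := by
    have h' : w0.length = lenX (hElt x y z) := by rw [hlenXdef]; exact hw0len
    have h'' : (w0.length : ℤ) = (lenX (hElt x y z) : ℤ) := by exact_mod_cast h'
    omega
  omega
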